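/- For l ∈ ℕ, l ≥ 1, let Q^n_l = conv( (l·[−1,1]^{n−1} × {0}) ∪ {e_n, −e_n} ) ⊂ ℝ^n, n ≥ 2. Then the successive minima of Q^n_l with respect to ℤ^n are λ_1(Q^n_l) = … = λ_{n−1}(Q^n_l) = 1/l and λ_n(Q^n_l) = 1; consequently, for 1 ≤ i ≤ n−1, σ_i(Q^n_l) = C(n−1,i)·(2l)^i + 2·C(n−1,i−1)·(2l)^{i−1}. -/

import Mathlib

open Finset Pointwise MeasureTheory

/-- The integer lattice `ℤⁿ` viewed as a subset of `ℝⁿ`. -/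
def intLattice (n : ℕ) : Set (Fin n → ℝ) := {x | ∀ j, ∃ m : ℤ, x j = (m : ℝ)}

/-- The `i`-th successive minimum (for `1 ≤ i ≤ n`) of a set `K ⊆ ℝⁿ` with respect to `ℤⁿ`:
the infimum of all `l > 0` such that `l • K` contains at least `i` linearly independent
lattice points. -/
noncomputable def succMinima {n : ℕ} (K : Set (Fin n → ℝ)) (i : ℕ) : ℝ :=
  sInf {l : ℝ | 0 < l ∧
    i ≤ Module.finrank ℝ (Submodule.span ℝ ((l • K) ∩ intLattice n))}

/-- The slab `l·[−1,1]^{n−1} × {0} ⊆ ℝⁿ`: the cube of side `2l` in the first `n−1`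
coordinates, with last coordinate `0`. -/
def cubeSlice (n l : ℕ) : Set (Fin n → ℝ) :=
  {x | ∀ j : Fin n, ((j : ℕ) < n - 1 → |x j| ≤ (l : ℝ)) ∧ ((j : ℕ) = n - 1 → x j = 0)}

/-- The `n`-th standard unit vector of `ℝⁿ` (i.e. the last coordinate vector). -/
def lastUnitVec (n : ℕ) : Fin n → ℝ := fun j => if (j : ℕ) = n - 1 then 1 else 0

/-- The bipyramid `Q^n_l = conv( (l·[−1,1]^{n−1} × {0}) ∪ {e_n, −e_n} )`. -/
def Qnl (n l : ℕ) : Set (Fin n → ℝ) :=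
  convexHull ℝ (cubeSlice n l ∪ {lastUnitVec n, -lastUnitVec n})

namespace Stmt18Aux


variable {n l : ℕ}

lemma zero_mem_cubeSlice : (0 : Fin n → ℝ) ∈ cubeSlice n l := by
  intro j
  simp [cubeSlice]

lemma zero_mem_Qnl : (0 : Fin n → ℝ) ∈ Qnl n l :=
  subset_convexHull ℝ _ (Set.mem_union_left _ zero_mem_cubeSlice)

lemma convex_Qnl : Convex ℝ (Qnl n l) := convex_convexHull ℝ _

/-- key convexity bound -/
lemma abs_bound (hn : 2 ≤ n) {x : Fin n → ℝ} (hx : x ∈ Qnl n l)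
    {j : Fin n} (hj : (j : ℕ) < n - 1) :
    |x j| + l * |x ⟨n - 1, by omega⟩| ≤ l := by
  set jl : Fin n := ⟨n - 1, by omega⟩ with hjl
  have hconv : Convex ℝ {y : Fin n → ℝ | |y j| + l * |y jl| ≤ (l : ℝ)} := by
    intro y hy z hz a b ha hb hab
    simp only [Set.mem_setOf_eq] at hy hz ⊢
    have h1 : |(a • y + b • z) j| ≤ a * |y j| + b * |z j| := by
      simp only [Pi.add_apply, Pi.smul_apply, smul_eq_mul]
      calc |a * y j + b * z j| ≤ |a * y j| + |b * z j| := abs_add_le _ _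
        _ = a * |y j| + b * |z j| := by
            rw [abs_mul, abs_mul, abs_of_nonneg ha, abs_of_nonneg hb]
    have h2 : |(a • y + b • z) jl| ≤ a * |y jl| + b * |z jl| := by
      simp only [Pi.add_apply, Pi.smul_apply, smul_eq_mul]
      calc |a * y jl + b * z jl| ≤ |a * y jl| + |b * z jl| := abs_add_le _ _
        _ = a * |y jl| + b * |z jl| := by
            rw [abs_mul, abs_mul, abs_of_nonneg ha, abs_of_nonneg hb]
    have hl0 : (0:ℝ) ≤ l := Nat.cast_nonneg l
    nlinarith [hy, hz]
  have hsub : cubeSlice n l ∪ {lastUnitVec n, -lastUnitVec n} ⊆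
      {y : Fin n → ℝ | |y j| + l * |y jl| ≤ (l : ℝ)} := by
    rintro y (hy | hy)
    · have h1 : |y j| ≤ (l:ℝ) := (hy j).1 hj
      have h2 : y jl = 0 := (hy jl).2 rfl
      simp [Set.mem_setOf_eq, h2, h1]
    · have hj' : (j : ℕ) ≠ n - 1 := by omega
      rcases hy with hy | hy
      · subst hy
        simp only [Set.mem_setOf_eq, lastUnitVec, hj', if_false]
        have : (jl : ℕ) = n - 1 := rfl
        simp [this]
      · simp only [Set.mem_singleton_iff] at hy
        subst hy
        simp only [Set.mem_setOf_eq, Pi.neg_apply, lastUnitVec, hj', if_false]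
        have : (jl : ℕ) = n - 1 := rfl
        simp [this]
  exact convexHull_min hsub hconv hx

lemma lastUnitVec_eq (hn : 2 ≤ n) :
    lastUnitVec n = Pi.single (⟨n - 1, by omega⟩ : Fin n) 1 := by
  funext j
  simp only [lastUnitVec, Pi.single_apply]
  by_cases h : (j : ℕ) = n - 1
  · have : j = (⟨n - 1, by omega⟩ : Fin n) := Fin.ext h
    simp [h, this]
  · have : j ≠ (⟨n - 1, by omega⟩ : Fin n) := by
      intro hc; exact h (by rw [hc])
    simp [h, this]

lemma lE_mem_cubeSlice (hn : 2 ≤ n) {i : Fin n} (hi : (i : ℕ) < n - 1) :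
    (l : ℝ) • (Pi.single i 1 : Fin n → ℝ) ∈ cubeSlice n l := by
  intro j
  constructor
  · intro _
    simp only [Pi.smul_apply, Pi.single_apply, smul_eq_mul]
    by_cases h : j = i <;> simp [h]
  · intro hj
    have : j ≠ i := by intro hc; rw [hc] at hj; omega
    simp [Pi.smul_apply, Pi.single_apply, this]

lemma single_mem_smul_lo (hn : 2 ≤ n) (hl : 1 ≤ l) {μ : ℝ} (hμ : 1 / (l:ℝ) ≤ μ)
    {i : Fin n} (hi : (i : ℕ) < n - 1) :
    (Pi.single i 1 : Fin n → ℝ) ∈ μ • Qnl n l := by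
  have hl0 : (0:ℝ) < l := by exact_mod_cast hl
  have hμ0 : 0 < μ := lt_of_lt_of_le (by positivity) hμ
  rw [Set.mem_smul_set_iff_inv_smul_mem₀ (ne_of_gt hμ0)]
  have h1 : (l : ℝ) • (Pi.single i 1 : Fin n → ℝ) ∈ Qnl n l :=
    subset_convexHull ℝ _ (Set.mem_union_left _ (lE_mem_cubeSlice hn hi))
  have hc0 : 0 ≤ (μ * l)⁻¹ := by positivity
  have hc1 : (μ * l)⁻¹ ≤ 1 := by
    rw [inv_le_one_iff₀]
    right
    calc (1:ℝ) = (1/l) * l := by field_simp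
    _ ≤ μ * l := by nlinarith
  have := convex_Qnl.smul_mem_of_zero_mem zero_mem_Qnl h1 ⟨hc0, hc1⟩
  have heq : (μ * l)⁻¹ • ((l:ℝ) • (Pi.single i 1 : Fin n → ℝ)) = μ⁻¹ • (Pi.single i 1 : Fin n → ℝ) := by
    rw [smul_smul]
    congr 1
    rw [mul_inv]
    field_simp
  rwa [heq] at this

lemma single_mem_smul_last (hn : 2 ≤ n) {μ : ℝ} (hμ : 1 ≤ μ) :
    (Pi.single (⟨n - 1, by omega⟩ : Fin n) 1 : Fin n → ℝ) ∈ μ • Qnl n l := by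
  have hμ0 : 0 < μ := lt_of_lt_of_le one_pos hμ
  rw [Set.mem_smul_set_iff_inv_smul_mem₀ (ne_of_gt hμ0)]
  have h1 : (Pi.single (⟨n - 1, by omega⟩ : Fin n) 1 : Fin n → ℝ) ∈ Qnl n l := by
    rw [← lastUnitVec_eq hn]
    exact subset_convexHull ℝ _ (Set.mem_union_right _ (by simp))
  have hc0 : 0 ≤ μ⁻¹ := by positivity
  have hc1 : μ⁻¹ ≤ 1 := by rw [inv_le_one_iff₀]; right; exact hμ
  exact convex_Qnl.smul_mem_of_zero_mem zero_mem_Qnl h1 ⟨hc0, hc1⟩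

lemma single_mem_lattice (i : Fin n) : (Pi.single i 1 : Fin n → ℝ) ∈ intLattice n := by
  intro j
  by_cases h : j = i
  · exact ⟨1, by subst h; simp⟩
  · exact ⟨0, by simp [Pi.single_apply, h]⟩

noncomputable def rk (n l : ℕ) (μ : ℝ) : ℕ :=
  Module.finrank ℝ (Submodule.span ℝ ((μ • Qnl n l) ∩ intLattice n))

lemma rank_ge_lo (hn : 2 ≤ n) (hl : 1 ≤ l) {μ : ℝ} (hμ : 1 / (l:ℝ) ≤ μ) :
    n - 1 ≤ rk n l μ := by
  set v : Fin (n-1) → (Fin n → ℝ) :=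
    fun i => Pi.single (Fin.castLE (by omega : n-1 ≤ n) i) 1 with hv
  have hli : LinearIndependent ℝ v := by
    have h2 := (Pi.basisFun ℝ (Fin n)).linearIndependent.comp
      (Fin.castLE (by omega : n-1 ≤ n)) (Fin.castLE_injective _)
    convert h2 using 1
    funext i
    simp [hv]
  have hsub : Set.range v ⊆ ↑(Submodule.span ℝ ((μ • Qnl n l) ∩ intLattice n)) := by
    rintro _ ⟨i, rfl⟩
    apply Submodule.subset_span
    refine ⟨single_mem_smul_lo hn hl hμ ?_, single_mem_lattice _⟩
    simpa using i.isLt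
  calc n - 1 = Module.finrank ℝ (Submodule.span ℝ (Set.range v)) := by
        rw [finrank_span_eq_card hli]; simp
    _ ≤ rk n l μ := Submodule.finrank_mono (Submodule.span_le.mpr hsub)

lemma rank_ge_hi (hn : 2 ≤ n) (hl : 1 ≤ l) {μ : ℝ} (hμ : 1 ≤ μ) :
    n ≤ rk n l μ := by
  set v : Fin n → (Fin n → ℝ) := fun i => Pi.single i 1 with hv
  have hli : LinearIndependent ℝ v := by
    have h2 := (Pi.basisFun ℝ (Fin n)).linearIndependent
    convert h2 using 1
    funext i
    simp [hv]
  have hl0 : (1:ℝ) ≤ l := by exact_mod_cast hl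
  have hsub : Set.range v ⊆ ↑(Submodule.span ℝ ((μ • Qnl n l) ∩ intLattice n)) := by
    rintro _ ⟨i, rfl⟩
    apply Submodule.subset_span
    refine ⟨?_, single_mem_lattice _⟩
    by_cases hi : (i : ℕ) < n - 1
    · refine single_mem_smul_lo hn hl ?_ hi
      calc 1 / (l:ℝ) ≤ 1 := by rw [div_le_one (by linarith)]; exact hl0
        _ ≤ μ := hμ
    · have hieq : (i:ℕ) = n - 1 := by have := i.isLt; omega
      have : i = (⟨n - 1, by omega⟩ : Fin n) := Fin.ext (by simp [hieq])
      rw [this]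
      exact single_mem_smul_last hn hμ
  calc n = Module.finrank ℝ (Submodule.span ℝ (Set.range v)) := by
        rw [finrank_span_eq_card hli]; simp
    _ ≤ rk n l μ := Submodule.finrank_mono (Submodule.span_le.mpr hsub)

lemma int_abs_lt_one {r : ℝ} (h : |r| < 1) (hm : ∃ m : ℤ, r = (m : ℝ)) : r = 0 := by
  obtain ⟨m, rfl⟩ := hm
  have h1 : |m| < 1 := by exact_mod_cast (by rwa [← Int.cast_abs] at h : ((|m| : ℤ) : ℝ) < 1)
  have : m = 0 := Int.abs_lt_one_iff.mp h1
  simp [this]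

lemma rank_eq_zero (hn : 2 ≤ n) (hl : 1 ≤ l) {μ : ℝ} (h0 : 0 < μ)
    (hμ : μ < 1 / (l:ℝ)) : rk n l μ = 0 := by
  have hl0 : (1:ℝ) ≤ l := by exact_mod_cast hl
  have hkey : (μ • Qnl n l) ∩ intLattice n ⊆ {0} := by
    rintro x ⟨⟨y, hy, rfl⟩, hlat⟩
    have hyb : ∀ j : Fin n, (j:ℕ) < n - 1 → |y j| + l * |y ⟨n-1, by omega⟩| ≤ l :=
      fun j hj => abs_bound hn hy hj
    have hylast : |y ⟨n-1, by omega⟩| ≤ 1 := by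
      have h := hyb ⟨0, by omega⟩ (by simpa using by omega : ((⟨0, by omega⟩ : Fin n) : ℕ) < n - 1)
      nlinarith [abs_nonneg (y ⟨0, by omega⟩)]
    have hmemz : ∀ j : Fin n, (μ • y) j = 0 := by
      intro j
      have hj' : (j:ℕ) < n - 1 ∨ (j:ℕ) = n - 1 := by have := j.isLt; omega
      apply int_abs_lt_one _ (hlat j)
      rcases hj' with hj | hj
      · have h1 : |y j| ≤ l := by nlinarith [hyb j hj, abs_nonneg (y ⟨n-1, by omega⟩)]
        have : |(μ • y) j| = μ * |y j| := by
          simp [Pi.smul_apply, abs_mul, abs_of_pos h0]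
        rw [this]
        calc μ * |y j| ≤ μ * l := by nlinarith
          _ < 1 := by
            rw [lt_div_iff₀ (by linarith)] at hμ
            linarith
      · have hjeq : j = (⟨n-1, by omega⟩ : Fin n) := Fin.ext hj
        have : |(μ • y) j| = μ * |y j| := by
          simp [Pi.smul_apply, abs_mul, abs_of_pos h0]
        rw [this, hjeq]
        have hμ1 : μ < 1 := by
          have : 1 / (l:ℝ) ≤ 1 := by rw [div_le_one (by linarith)]; exact hl0
          linarith
        nlinarith
    have : μ • y = 0 := funext hmemz
    simp [this]
  have : Submodule.span ℝ ((μ • Qnl n l) ∩ intLattice n) = ⊥ :=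
    Submodule.span_eq_bot.mpr (fun x hx => Set.mem_singleton_iff.mp (hkey hx))
  rw [rk, this, finrank_bot]

lemma rank_le_sub_one (hn : 2 ≤ n) (hl : 1 ≤ l) {μ : ℝ} (h0 : 0 < μ)
    (hμ : μ < 1) : rk n l μ ≤ n - 1 := by
  have hl0 : (1:ℝ) ≤ l := by exact_mod_cast hl
  set π : (Fin n → ℝ) →ₗ[ℝ] ℝ := LinearMap.proj (⟨n-1, by omega⟩ : Fin n) with hπ
  have hker : Submodule.span ℝ ((μ • Qnl n l) ∩ intLattice n) ≤ LinearMap.ker π := by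
    rw [Submodule.span_le]
    rintro x ⟨⟨y, hy, rfl⟩, hlat⟩
    have hyb := abs_bound hn hy (j := ⟨0, by omega⟩) (by simpa using by omega)
    have hylast : |y ⟨n-1, by omega⟩| ≤ 1 := by
      nlinarith [abs_nonneg (y ⟨0, by omega⟩)]
    have : (μ • y) ⟨n-1, by omega⟩ = 0 := by
      apply int_abs_lt_one _ (hlat _)
      have : |(μ • y) ⟨n-1, by omega⟩| = μ * |y ⟨n-1, by omega⟩| := by
        simp [Pi.smul_apply, abs_mul, abs_of_pos h0]
      rw [this]
      nlinarith
    simpa [hπ, LinearMap.mem_ker] using this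
  have hne : LinearMap.ker π ≠ ⊤ := by
    intro hc
    have : π (Pi.single (⟨n-1, by omega⟩ : Fin n) 1) = 0 := by
      rw [← LinearMap.mem_ker, hc]; trivial
    simp [hπ] at this
  have hlt : LinearMap.ker π < ⊤ := lt_top_iff_ne_top.mpr hne
  have h1 : Module.finrank ℝ (LinearMap.ker π) < Module.finrank ℝ (Fin n → ℝ) :=
    Submodule.finrank_lt hlt.ne
  have h2 : Module.finrank ℝ (Fin n → ℝ) = n := by simp
  have h3 : rk n l μ ≤ Module.finrank ℝ (LinearMap.ker π) :=
    Submodule.finrank_mono hker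
  omega

lemma rk_iff_lo (hn : 2 ≤ n) (hl : 1 ≤ l) {j : ℕ} (hj1 : 1 ≤ j) (hj2 : j ≤ n - 1)
    {μ : ℝ} (h0 : 0 < μ) : j ≤ rk n l μ ↔ 1 / (l:ℝ) ≤ μ := by
  constructor
  · intro h
    by_contra hc
    push_neg at hc
    have := rank_eq_zero hn hl h0 hc
    omega
  · intro h
    exact le_trans hj2 (rank_ge_lo hn hl h)

lemma rk_iff_hi (hn : 2 ≤ n) (hl : 1 ≤ l) {μ : ℝ} (h0 : 0 < μ) :
    n ≤ rk n l μ ↔ 1 ≤ μ := by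
  constructor
  · intro h
    by_contra hc
    push_neg at hc
    have := rank_le_sub_one hn hl h0 hc
    omega
  · exact rank_ge_hi hn hl

lemma succMinima_Qnl_lo (hn : 2 ≤ n) (hl : 1 ≤ l) {j : ℕ} (hj1 : 1 ≤ j)
    (hj2 : j ≤ n - 1) : succMinima (Qnl n l) j = 1 / (l:ℝ) := by
  have hl0 : (0:ℝ) < l := by exact_mod_cast hl
  have hset : {μ : ℝ | 0 < μ ∧
      j ≤ Module.finrank ℝ (Submodule.span ℝ ((μ • Qnl n l) ∩ intLattice n))} =
      Set.Ici (1 / (l:ℝ)) := by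
    ext μ
    constructor
    · rintro ⟨h0, hr⟩
      exact (rk_iff_lo hn hl hj1 hj2 h0).mp hr
    · intro h
      have h0 : 0 < μ := lt_of_lt_of_le (by positivity) h
      exact ⟨h0, (rk_iff_lo hn hl hj1 hj2 h0).mpr h⟩
  rw [succMinima, hset, csInf_Ici]

lemma succMinima_Qnl_hi (hn : 2 ≤ n) (hl : 1 ≤ l) :
    succMinima (Qnl n l) n = 1 := by
  have hset : {μ : ℝ | 0 < μ ∧
      n ≤ Module.finrank ℝ (Submodule.span ℝ ((μ • Qnl n l) ∩ intLattice n))} =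
      Set.Ici (1:ℝ) := by
    ext μ
    constructor
    · rintro ⟨h0, hr⟩
      exact (rk_iff_hi hn hl h0).mp hr
    · intro h
      have h0 : 0 < μ := lt_of_lt_of_le one_pos h
      exact ⟨h0, (rk_iff_hi hn hl h0).mpr h⟩
  rw [succMinima, hset, csInf_Ici]

lemma cubeSlice_neg {x : Fin n → ℝ} : -x ∈ cubeSlice n l ↔ x ∈ cubeSlice n l := by
  simp only [cubeSlice, Set.mem_setOf_eq]
  constructor
  · intro h j
    refine ⟨fun hj => ?_, fun hj => ?_⟩
    · have := (h j).1 hj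
      rwa [Pi.neg_apply, abs_neg] at this
    · have := (h j).2 hj
      rw [Pi.neg_apply] at this
      linarith
  · intro h j
    refine ⟨fun hj => ?_, fun hj => ?_⟩
    · rw [Pi.neg_apply, abs_neg]; exact (h j).1 hj
    · rw [Pi.neg_apply, (h j).2 hj, neg_zero]

lemma neg_Qnl : -Qnl n l = Qnl n l := by
  rw [Qnl, ← convexHull_neg]
  congr 1
  ext x
  simp only [Set.mem_neg, Set.mem_union, Set.mem_insert_iff, Set.mem_singleton_iff]
  constructor
  · rintro (h | h | h)
    · left; exact cubeSlice_neg.mp h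
    · right; right; exact neg_eq_iff_eq_neg.mp h
    · right; left; exact neg_injective h
  · rintro (h | h | h)
    · left; exact cubeSlice_neg.mpr h
    · right; right; rw [h]
    · right; left; rw [h, neg_neg]

lemma sub_Qnl : Qnl n l - Qnl n l = (2:ℝ) • Qnl n l := by
  ext x
  constructor
  · rintro ⟨a, ha, b, hb, rfl⟩
    refine ⟨(1/2 : ℝ) • a + (1/2 : ℝ) • (-b), ?_, ?_⟩
    · have hnb : -b ∈ Qnl n l := by rw [← neg_Qnl]; exact Set.neg_mem_neg.mpr hb
      exact convex_Qnl ha hnb (by norm_num) (by norm_num) (by norm_num)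
    · funext j
      simp only [Pi.smul_apply, Pi.add_apply, Pi.neg_apply, Pi.sub_apply, smul_eq_mul]
      ring
  · rintro ⟨q, hq, rfl⟩
    have hnq : -q ∈ Qnl n l := by rw [← neg_Qnl]; exact Set.neg_mem_neg.mpr hq
    refine ⟨q, hq, -q, hnq, ?_⟩
    funext j
    simp only [Pi.sub_apply, Pi.neg_apply, Pi.smul_apply, smul_eq_mul]
    ring

lemma succMinima_sub_lo (hn : 2 ≤ n) (hl : 1 ≤ l) {j : ℕ} (hj1 : 1 ≤ j)
    (hj2 : j ≤ n - 1) :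
    succMinima (Qnl n l - Qnl n l) j = 1 / (2 * (l:ℝ)) := by
  have hl0 : (0:ℝ) < l := by exact_mod_cast hl
  have hset : {μ : ℝ | 0 < μ ∧
      j ≤ Module.finrank ℝ (Submodule.span ℝ ((μ • (Qnl n l - Qnl n l)) ∩ intLattice n))} =
      Set.Ici (1 / (2 * (l:ℝ))) := by
    ext μ
    constructor
    · rintro ⟨h0, hr⟩
      rw [sub_Qnl, smul_smul] at hr
      have h2 : (0:ℝ) < μ * 2 := by positivity
      have := (rk_iff_lo hn hl hj1 hj2 h2).mp hr
      rw [div_le_iff₀ hl0] at this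
      have : (1:ℝ) ≤ μ * (2 * l) := by nlinarith
      rw [Set.mem_Ici, div_le_iff₀ (by positivity)]
      linarith
    · intro h
      rw [Set.mem_Ici, div_le_iff₀ (by positivity)] at h
      have h0 : 0 < μ := by nlinarith
      refine ⟨h0, ?_⟩
      rw [sub_Qnl, smul_smul]
      have h2 : (0:ℝ) < μ * 2 := by positivity
      apply (rk_iff_lo hn hl hj1 hj2 h2).mpr
      rw [div_le_iff₀ hl0]
      nlinarith
  rw [succMinima, hset, csInf_Ici]

lemma succMinima_sub_hi (hn : 2 ≤ n) (hl : 1 ≤ l) :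
    succMinima (Qnl n l - Qnl n l) n = 1 / 2 := by
  have hset : {μ : ℝ | 0 < μ ∧
      n ≤ Module.finrank ℝ (Submodule.span ℝ ((μ • (Qnl n l - Qnl n l)) ∩ intLattice n))} =
      Set.Ici (1 / (2:ℝ)) := by
    ext μ
    constructor
    · rintro ⟨h0, hr⟩
      rw [sub_Qnl, smul_smul] at hr
      have h2 : (0:ℝ) < μ * 2 := by positivity
      have := (rk_iff_hi hn hl h2).mp hr
      rw [Set.mem_Ici]
      linarith
    · intro h
      rw [Set.mem_Ici] at h
      have h0 : 0 < μ := by linarith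
      refine ⟨h0, ?_⟩
      rw [sub_Qnl, smul_smul]
      have h2 : (0:ℝ) < μ * 2 := by positivity
      apply (rk_iff_hi hn hl h2).mpr
      linarith
  rw [succMinima, hset, csInf_Ici]

lemma sum_pow (hn : 2 ≤ n) {i : ℕ} (h1 : 1 ≤ i) (h2 : i ≤ n - 1) (a b : ℝ) :
    (∑ I ∈ (Finset.univ : Finset (Fin n)).powersetCard i,
      ∏ j ∈ I, (if (j : ℕ) = n - 1 then b else a)) =
    ((n-1).choose i : ℝ) * a ^ i + ((n-1).choose (i-1) : ℝ) * (b * a ^ (i-1)) := by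
  set lst : Fin n := ⟨n-1, by omega⟩ with hlst
  set t := (Finset.univ : Finset (Fin n)).erase lst with ht
  have hne : ∀ j : Fin n, j ∈ t → (j : ℕ) ≠ n - 1 := by
    intro j hj hc
    exact (mem_erase.mp hj).1 (Fin.ext hc)
  have huniv : (Finset.univ : Finset (Fin n)) = insert lst t :=
    (Finset.insert_erase (mem_univ _)).symm
  have hcard_t : t.card = n - 1 := by
    rw [ht, card_erase_of_mem (mem_univ _), card_univ, Fintype.card_fin]
  have hieq : i = (i-1) + 1 := (Nat.succ_pred_eq_of_pos h1).symm
  rw [huniv, hieq, powersetCard_succ_insert (notMem_erase _ _)]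
  have hdisj : Disjoint (powersetCard ((i-1)+1) t)
      ((powersetCard (i-1) t).image (insert lst)) := by
    rw [Finset.disjoint_left]
    intro I hI hI'
    obtain ⟨J, hJ, rfl⟩ := Finset.mem_image.mp hI'
    have hsub := (Finset.mem_powersetCard.mp hI).1
    exact (notMem_erase lst Finset.univ) (hsub (Finset.mem_insert_self lst J))
  rw [Finset.sum_union hdisj]
  have hsum1 : (∑ I ∈ powersetCard ((i-1)+1) t,
      ∏ j ∈ I, (if (j : ℕ) = n - 1 then b else a)) = ((n-1).choose i : ℝ) * a ^ i := by
    have heach : ∀ I ∈ powersetCard ((i-1)+1) t,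
        (∏ j ∈ I, (if (j : ℕ) = n - 1 then b else a)) = a ^ i := by
      intro I hI
      obtain ⟨hsub, hcard⟩ := Finset.mem_powersetCard.mp hI
      rw [Finset.prod_congr rfl (fun j hj => if_neg (hne j (hsub hj)))]
      rw [Finset.prod_const, hcard, ← hieq]
    rw [Finset.sum_congr rfl heach, Finset.sum_const, card_powersetCard, hcard_t,
      nsmul_eq_mul, ← hieq]
  have hsum2 : (∑ I ∈ (powersetCard (i-1) t).image (insert lst),
      ∏ j ∈ I, (if (j : ℕ) = n - 1 then b else a)) =
      ((n-1).choose (i-1) : ℝ) * (b * a ^ (i-1)) := by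
    rw [Finset.sum_image]
    · have heach : ∀ J ∈ powersetCard (i-1) t,
          (∏ j ∈ insert lst J, (if (j : ℕ) = n - 1 then b else a)) = b * a ^ (i-1) := by
        intro J hJ
        obtain ⟨hsub, hcard⟩ := Finset.mem_powersetCard.mp hJ
        have hnotmem : lst ∉ J := fun hc => (notMem_erase lst Finset.univ) (hsub hc)
        rw [Finset.prod_insert hnotmem]
        have h1' : (if ((lst : Fin n) : ℕ) = n - 1 then b else a) = b := if_pos rfl
        rw [h1', Finset.prod_congr rfl (fun j hj => if_neg (hne j (hsub hj))),
          Finset.prod_const, hcard]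
      rw [Finset.sum_congr rfl heach, Finset.sum_const, card_powersetCard, hcard_t,
        nsmul_eq_mul]
    · intro I₁ h₁ I₂ h₂ heq
      have m₁ : lst ∉ I₁ := fun hc =>
        (notMem_erase lst Finset.univ) ((Finset.mem_powersetCard.mp h₁).1 hc)
      have m₂ : lst ∉ I₂ := fun hc =>
        (notMem_erase lst Finset.univ) ((Finset.mem_powersetCard.mp h₂).1 hc)
      rw [← Finset.erase_insert m₁, ← Finset.erase_insert m₂, heq]
  rw [hsum1, hsum2]
  simp only [Nat.add_sub_cancel]
  rw [← hieq]


end Stmt18Aux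

/-- The successive minima of `Q^n_l` with respect to `ℤⁿ` are
`λ_1 = … = λ_{n−1} = 1/l` and `λ_n = 1`; consequently, for `1 ≤ i ≤ n−1`,
`σ_i(Q^n_l) = C(n−1,i)(2l)^i + 2·C(n−1,i−1)(2l)^{i−1}`, where `σ_i(Q^n_l)` is the `i`-th
elementary symmetric polynomial in `1/λ_1(DQ^n_l),…,1/λ_n(DQ^n_l)` and `DQ^n_l` is the
difference body. -/
theorem stmt18 (n l : ℕ) (hn : 2 ≤ n) (hl : 1 ≤ l) :
    (∀ j : ℕ, 1 ≤ j → j ≤ n - 1 → succMinima (Qnl n l) j = 1 / (l : ℝ)) ∧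
    succMinima (Qnl n l) n = 1 ∧
    (∀ i : ℕ, 1 ≤ i → i ≤ n - 1 →
      (∑ I ∈ (Finset.univ : Finset (Fin n)).powersetCard i,
          ∏ j ∈ I, 1 / succMinima (Qnl n l - Qnl n l) ((j : ℕ) + 1)) =
        ((n - 1).choose i : ℝ) * (2 * (l : ℝ)) ^ i +
          2 * ((n - 1).choose (i - 1) : ℝ) * (2 * (l : ℝ)) ^ (i - 1)) := by
  refine ⟨fun j hj1 hj2 => Stmt18Aux.succMinima_Qnl_lo hn hl hj1 hj2,
    Stmt18Aux.succMinima_Qnl_hi hn hl, ?_⟩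
  intro i hi1 hi2
  have hterm : ∀ j : Fin n, 1 / succMinima (Qnl n l - Qnl n l) ((j:ℕ)+1) =
      if (j:ℕ) = n - 1 then (2:ℝ) else 2 * (l:ℝ) := by
    intro j
    have hl0 : (0:ℝ) < l := by exact_mod_cast hl
    by_cases h : (j:ℕ) = n - 1
    · rw [if_pos h, h]
      have hnn : (n-1) + 1 = n := by omega
      rw [hnn, Stmt18Aux.succMinima_sub_hi hn hl]
      norm_num
    · have hj : (j:ℕ)+1 ≤ n-1 := by have := j.isLt; omega
      rw [if_neg h, Stmt18Aux.succMinima_sub_lo hn hl (by omega) hj]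
      rw [one_div_one_div]
  rw [Finset.sum_congr rfl (fun I _ => Finset.prod_congr rfl (fun j _ => hterm j)),
    Stmt18Aux.sum_pow hn hi1 hi2 (2 * (l:ℝ)) 2]
  ring
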